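/- There exists a universal constant C > 0 such that the following holds for all d, m ∈ ℕ with m ≥ 2, all 0 < ε₁ ≤ 0.5, 0 < δ₁ ≤ 0.5, 0 < ε_d < 0.1, every dataset S = {(x_1,y_1),…,(x_m,y_m)} ⊆ ℝ^d × {−1,1} satisfying Assumption(ψ, φ) with ψ ≤ 0.1 and φ ≤ ε_d/(4m), every (ε₁, δ₁)-approximate KKT point w of the margin-maximization problem w.r.t. S with multipliers λ_1,…,λ_m, and every l ∈ [m]: setting ŵ = w − λ_l y_l x_l, if w* ∈ ℝ^d is a global optimum of the problem minimize ½‖v‖² subject to y_i ⟨v, x_i⟩ ≥ 1 for all i ∈ [m] \ {l}, then ⟨ŵ, w*⟩ ≥ (1 − C(√ε_d + √ε₁ + √δ₁))·‖ŵ‖·‖w*‖. -/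

import Mathlib

open Finset

private lemma aux_nstar (m nT ns : ℝ) (hm2 : 2 ≤ m) (hT2 : nT^2 ≤ 1.125*(m-1))
    (hT3 : m - 1 ≤ nT*ns) (h0 : 0 ≤ nT) (h1 : 0 ≤ ns) : m ≤ 2.25*ns^2 := by
  nlinarith [mul_le_mul hT3 hT3 (by linarith) (mul_nonneg h0 h1),
    mul_le_mul_of_nonneg_right hT2 (sq_nonneg ns), hm2, sq_nonneg (m-2), sq_nonneg ns]

private lemma auxsq (a : ℝ) (h : 0 < a) (h1 : a ≤ 1) : a ≤ Real.sqrt a := by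
  have hr := Real.sq_sqrt h.le
  have hr0 := Real.sqrt_nonneg a
  have hr1 : Real.sqrt a ≤ 1 := by nlinarith
  nlinarith

private lemma sqle (x y : ℝ) (hx : 0 ≤ x) (hy : 0 ≤ y) (h : x^2 ≤ y^2) : x ≤ y := by
  nlinarith [sq_nonneg (x-y), sq_nonneg (x+y)]

set_option maxHeartbeats 1000000 in
private lemma aux_fin (N ns m εd ε₁ δ₁ P a b c M : ℝ)
    (hmain : N^2 ≤ P + ε₁*N + ε₁*ns + m*δ₁ + 1.69*m*εd)
    (hNN : (1-0.65*εd)*ns ≤ N)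
    (hNstar : m ≤ 2.25*ns^2)
    (hMsq : M^2 = m) (hM14 : 1.41 ≤ M)
    (hN0 : 0 ≤ N) (hns0 : 0 ≤ ns)
    (hεd : 0 < εd) (hεd' : εd < 0.1) (hε₁ : 0 < ε₁) (hε₁' : ε₁ ≤ 0.5)
    (hδ₁ : 0 < δ₁) (hδ₁' : δ₁ ≤ 0.5)
    (ha : εd ≤ a) (hb : ε₁ ≤ b) (hc : δ₁ ≤ c) :
    (1 - 6*(a+b+c))*(N*ns) ≤ P := by
  have hprod0 : 0 ≤ N*ns := mul_nonneg hN0 hns0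
  have hN15 : M ≤ 1.5*ns := by
    refine sqle M (1.5*ns) (by linarith) (by linarith) ?_
    have : (1.5*ns)^2 = 2.25*ns^2 := by ring
    linarith only [hMsq.le, hMsq.ge, hNstar, this]
  have hN94 : 0.94 ≤ ns := by linarith only [hN15, hM14]
  have hNwh : 0.87 ≤ N := by
    have p := mul_le_mul_of_nonneg_right hεd'.le hns0
    linarith only [hNN, hN94, p]
  have hNN41 : 0.41*m ≤ N*ns := by
    have p := mul_le_mul_of_nonneg_right hNN hns0
    have q := mul_le_mul_of_nonneg_right hεd'.le (sq_nonneg ns)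
    nlinarith [p, q, hNstar]
  have e5 : (1-0.65*εd)*(N*ns) ≤ N^2 := by
    have p := mul_le_mul_of_nonneg_left hNN hN0
    nlinarith [p]
  have e1 : ε₁*N ≤ 1.07*(ε₁*(N*ns)) := by
    have p := mul_le_mul_of_nonneg_right hN94 (mul_nonneg hε₁.le hN0)
    have q := mul_nonneg hε₁.le hN0
    nlinarith [p, q]
  have e2 : ε₁*ns ≤ 1.15*(ε₁*(N*ns)) := by
    have p := mul_le_mul_of_nonneg_right hNwh (mul_nonneg hε₁.le hns0)
    have q := mul_nonneg hε₁.le hns0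
    nlinarith [p, q]
  have e3 : m*δ₁ ≤ 2.44*(δ₁*(N*ns)) := by
    have p := mul_le_mul_of_nonneg_left hNN41 hδ₁.le
    have q := mul_nonneg hδ₁.le hprod0
    nlinarith [p, q]
  have e4 : 1.69*m*εd ≤ 4.13*(εd*(N*ns)) := by
    have p := mul_le_mul_of_nonneg_left hNN41 hεd.le
    have q := mul_nonneg hεd.le hprod0
    nlinarith [p, q]
  have f1 : 0 ≤ (6*a - 4.78*εd)*(N*ns) := mul_nonneg (by linarith) hprod0
  have f2 : 0 ≤ (6*b - 2.22*ε₁)*(N*ns) := mul_nonneg (by linarith) hprod0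
  have f3 : 0 ≤ (6*c - 2.44*δ₁)*(N*ns) := mul_nonneg (by linarith) hprod0
  linarith only [hmain, e5, e1, e2, e3, e4, f1, f2, f3]

private lemma aux_m14 (M m : ℝ) (h : M^2 = m) (h2 : 2 ≤ m) (h0 : 0 ≤ M) : 1.41 ≤ M := by
  nlinarith

private lemma aux_wm (W M Λ e dl : ℝ) (hW2 : W^2 ≤ Λ + M^2*dl + e*W)
    (hΛM : Λ ≤ 1.07*M*(W+e)) (hM14 : 1.41 ≤ M) (hW0 : 0 ≤ W)
    (he0 : 0 ≤ e) (he : e ≤ 0.5) (hdl0 : 0 ≤ dl) (hdl : dl ≤ 0.5) : W ≤ 2*M := by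
  have c1 := mul_le_mul_of_nonneg_right he hW0
  have c2 := mul_le_mul_of_nonneg_right hdl (sq_nonneg M)
  have c3 := mul_le_mul_of_nonneg_left he (by linarith : (0:ℝ) ≤ 1.07*M)
  have hq : W^2 ≤ 1.07*M*W + 0.535*M + 0.5*M^2 + 0.5*W := by nlinarith [hW2, hΛM, c1, c2, c3]
  nlinarith [hq, mul_nonneg (sub_nonneg.2 hM14) hW0,
    mul_nonneg (sub_nonneg.2 hM14) (by linarith : (0:ℝ) ≤ M), hM14, hW0]

set_option maxHeartbeats 4000000 in
theorem stmt_1 :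
    ∃ C : ℝ, 0 < C ∧
      ∀ (d m : ℕ), 2 ≤ m →
      ∀ (ε₁ δ₁ εd ψ φ : ℝ),
        0 < ε₁ → ε₁ ≤ 0.5 → 0 < δ₁ → δ₁ ≤ 0.5 → 0 < εd → εd < 0.1 →
        ψ ≤ 0.1 → φ ≤ εd / (4 * m) →
      ∀ (x : Fin m → EuclideanSpace ℝ (Fin d)) (y : Fin m → ℝ),
        (∀ i, y i = 1 ∨ y i = -1) →
        (∀ i, 1 - ψ ≤ ‖x i‖ ^ 2 ∧ ‖x i‖ ^ 2 ≤ 1 + ψ) →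
        (∀ i j, i ≠ j → |(inner ℝ (x i) (x j) : ℝ)| ≤ φ) →
      ∀ (w : EuclideanSpace ℝ (Fin d)) (lam : Fin m → ℝ),
        (∀ i, 0 ≤ lam i) →
        ‖w - ∑ i, (lam i * y i) • x i‖ ≤ ε₁ →
        (∀ i, lam i * (y i * (inner ℝ w (x i) : ℝ) - 1) ≤ δ₁) →
        (∀ i, 1 ≤ y i * (inner ℝ w (x i) : ℝ)) →
      ∀ l : Fin m,
      ∀ wstar : EuclideanSpace ℝ (Fin d),
        (∀ i, i ≠ l → 1 ≤ y i * (inner ℝ wstar (x i) : ℝ)) →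
        (∀ v : EuclideanSpace ℝ (Fin d),
          (∀ i, i ≠ l → 1 ≤ y i * (inner ℝ v (x i) : ℝ)) →
          (1 / 2) * ‖wstar‖ ^ 2 ≤ (1 / 2) * ‖v‖ ^ 2) →
        (1 - C * (Real.sqrt εd + Real.sqrt ε₁ + Real.sqrt δ₁)) *
            (‖w - (lam l * y l) • x l‖ * ‖wstar‖) ≤
          (inner ℝ (w - (lam l * y l) • x l) wstar : ℝ) := by
  refine ⟨6, by norm_num, ?_⟩
  intro d m hm ε₁ δ₁ εd ψ φ hε₁ hε₁' hδ₁ hδ₁' hεd hεd' hψ hφ x y hy hxn hxij w lam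
    hlam hstat hcomp hfeas l wstar hwfeas hwopt
  have hm2 : (2:ℝ) ≤ (m:ℝ) := by exact_mod_cast hm
  have hmpos : (0:ℝ) < m := by linarith
  obtain ⟨s, hsdef⟩ : ∃ s : Fin m → EuclideanSpace ℝ (Fin d), s = fun i => y i • x i := ⟨_, rfl⟩
  have hy1 : ∀ i, y i * y i = 1 := by
    intro i; rcases hy i with h | h <;> rw [h] <;> norm_num
  have hinner_s_right : ∀ (v : EuclideanSpace ℝ (Fin d)) i,
      (inner ℝ v (s i) : ℝ) = y i * inner ℝ v (x i) := by
    intro v i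
    simp only [hsdef]
    exact real_inner_smul_right v (x i) (y i)
  have hinner_ss : ∀ i j, (inner ℝ (s i) (s j) : ℝ) = (y i * y j) * inner ℝ (x i) (x j) := by
    intro i j
    simp only [hsdef]
    rw [real_inner_smul_left, real_inner_smul_right]; ring
  have hss_diag : ∀ i, (0.9:ℝ) ≤ inner ℝ (s i) (s i) ∧ ((inner ℝ (s i) (s i) : ℝ)) ≤ 1.1 := by
    intro i
    have h : (inner ℝ (s i) (s i) : ℝ) = ‖x i‖^2 := by
      rw [hinner_ss, hy1, one_mul, real_inner_self_eq_norm_sq]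
    rcases hxn i with ⟨h1, h2⟩
    constructor <;> rw [h] <;> linarith
  have hss_off : ∀ i j, i ≠ j → |(inner ℝ (s i) (s j) : ℝ)| ≤ φ := by
    intro i j hij
    rw [hinner_ss, abs_mul]
    have : |y i * y j| = 1 := by
      rcases hy i with h | h <;> rcases hy j with h' | h' <;> rw [h, h'] <;> norm_num
    rw [this, one_mul]; exact hxij i j hij
  have hφ0 : (0:ℝ) ≤ φ := by
    have h01 : (⟨0, by omega⟩ : Fin m) ≠ ⟨1, by omega⟩ := by simp [Fin.ext_iff]
    exact le_trans (abs_nonneg _) (hxij _ _ h01)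
  have hφ4m : φ * (4 * m) ≤ εd := (le_div_iff₀ (by positivity)).mp hφ
  have hws : ∀ i, 1 ≤ (inner ℝ w (s i) : ℝ) := by
    intro i; rw [hinner_s_right]; exact hfeas i
  have hcomp' : ∀ i, lam i * (inner ℝ w (s i) : ℝ) ≤ lam i + δ₁ := by
    intro i
    have h := hcomp i
    rw [hinner_s_right]
    linarith only [h]
  have hwstar_s : ∀ i, i ≠ l → 1 ≤ (inner ℝ (s i) wstar : ℝ) := by
    intro i hi
    rw [real_inner_comm, hinner_s_right]
    exact hwfeas i hi
  -- sums
  obtain ⟨U, hUdef⟩ : ∃ U : EuclideanSpace ℝ (Fin d), U = ∑ i, lam i • s i := ⟨_, rfl⟩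
  have hUeq : ∑ i, (lam i * y i) • x i = U := by
    rw [hUdef]
    simp only [hsdef, mul_smul]
  rw [hUeq] at hstat
  obtain ⟨Λ, hΛdef⟩ : ∃ t : ℝ, t = ∑ i, lam i := ⟨_, rfl⟩
  have hΛ0 : 0 ≤ Λ := hΛdef ▸ Finset.sum_nonneg fun i _ => hlam i
  have hsum_inner_right : ∀ (v : EuclideanSpace ℝ (Fin d)) (t : Finset (Fin m)) (c : Fin m → ℝ),
      (inner ℝ v (∑ i ∈ t, c i • s i) : ℝ) = ∑ i ∈ t, c i * inner ℝ v (s i) := by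
    intro v t c
    rw [inner_sum]
    exact Finset.sum_congr rfl fun i _ => real_inner_smul_right _ _ _
  have hUU : (inner ℝ U U : ℝ) = ∑ i, ∑ j, (lam i * lam j) * inner ℝ (s i) (s j) := by
    rw [hUdef, sum_inner]
    refine Finset.sum_congr rfl fun i _ => ?_
    rw [real_inner_smul_left, hsum_inner_right, Finset.mul_sum]
    exact Finset.sum_congr rfl fun j _ => by ring
  obtain ⟨M, hMdef⟩ : ∃ t : ℝ, t = Real.sqrt m := ⟨_, rfl⟩
  have hM0 : 0 ≤ M := hMdef ▸ Real.sqrt_nonneg _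
  have hMsq : M^2 = m := hMdef ▸ Real.sq_sqrt (le_of_lt hmpos)
  have hM14 : 1.41 ≤ M := aux_m14 M m hMsq hm2 hM0
  -- lower bound on ⟪U,U⟫
  have hUU_low : 0.875 * Λ^2 ≤ m * (inner ℝ U U : ℝ) := by
    have key1 : ∀ i j : Fin m,
        -(φ * (lam i * lam j)) + (if i = j then (0.9 + φ) * lam i^2 else 0)
          ≤ (lam i * lam j) * inner ℝ (s i) (s j) := by
      intro i j
      by_cases h : i = j
      · subst h
        rw [if_pos rfl]
        linarith only [mul_nonneg (sub_nonneg.2 (hss_diag i).1) (sq_nonneg (lam i))]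
      · simp only [if_neg h, add_zero]
        have h1 := (abs_le.1 (hss_off i j h)).1
        linarith only [mul_nonneg (mul_nonneg (hlam i) (hlam j))
          (by linarith only [h1] : (0:ℝ) ≤ (inner ℝ (s i) (s j) : ℝ) + φ)]
    have hsum1 : ∑ i, ∑ j, (-(φ * (lam i * lam j)) + (if i = j then (0.9 + φ) * lam i^2 else 0))
        ≤ (inner ℝ U U : ℝ) := by
      rw [hUU]
      exact Finset.sum_le_sum fun i _ => Finset.sum_le_sum fun j _ => key1 i j
    have hA : ∑ i, ∑ j, (φ * (lam i * lam j)) = φ * Λ^2 := by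
      rw [hΛdef, sq, Finset.sum_mul_sum, Finset.mul_sum]
      exact Finset.sum_congr rfl fun i _ => by rw [Finset.mul_sum]
    have hB : ∑ i, ∑ j, (if i = j then (0.9 + φ) * lam i^2 else 0) = (0.9 + φ) * ∑ i, lam i^2 := by
      rw [Finset.mul_sum]
      refine Finset.sum_congr rfl fun i _ => ?_
      rw [Finset.sum_ite_eq, if_pos (Finset.mem_univ i)]
    have hsum2 : ∑ i, ∑ j, (-(φ * (lam i * lam j)) + (if i = j then (0.9 + φ) * lam i^2 else 0))
        = -(φ * Λ^2) + (0.9 + φ) * ∑ i, lam i^2 := by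
      rw [← hA, ← hB]
      simp only [Finset.sum_add_distrib, Finset.sum_neg_distrib]
    have hSQ : Λ^2 ≤ m * ∑ i, lam i^2 := by
      have h := sq_sum_le_card_mul_sum_sq (s := (univ : Finset (Fin m))) (f := lam)
      rw [card_univ, Fintype.card_fin] at h
      rw [hΛdef]
      exact_mod_cast h
    have hφm : φ * m ≤ 0.025 := by linarith only [hφ4m, hεd'.le]
    have hUUlow' : -(φ * Λ^2) + (0.9 + φ) * ∑ i, lam i^2 ≤ (inner ℝ U U : ℝ) := by
      rw [← hsum2]; exact hsum1
    have h1 := mul_le_mul_of_nonneg_left hUUlow' hmpos.le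
    have hφmΛ : (φ * m) * Λ^2 ≤ 0.025 * Λ^2 := mul_le_mul_of_nonneg_right hφm (sq_nonneg Λ)
    have h09 : 0.9 * Λ^2 ≤ 0.9 * ((m : ℝ) * ∑ i, lam i^2) := by linarith only [hSQ]
    have hφSQ : 0 ≤ φ * ((m : ℝ) * ∑ i, lam i^2) :=
      mul_nonneg hφ0 (le_trans (sq_nonneg Λ) hSQ)
    linarith only [h1, hφmΛ, h09, hφSQ, hSQ]
  -- step 2: norm bounds
  have hUnorm : ‖U‖ ≤ ‖w‖ + ε₁ := by
    have h1 : ‖U‖ = ‖w - (w - U)‖ := by rw [sub_sub_cancel]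
    calc ‖U‖ = ‖w - (w - U)‖ := h1
      _ ≤ ‖w‖ + ‖w - U‖ := norm_sub_le _ _
      _ ≤ ‖w‖ + ε₁ := by linarith
  have hΛM : Λ ≤ 1.07 * M * (‖w‖ + ε₁) := by
    have h2 : (inner ℝ U U : ℝ) = ‖U‖^2 := real_inner_self_eq_norm_sq U
    have h3 : ‖U‖^2 ≤ (‖w‖ + ε₁)^2 := pow_le_pow_left₀ (norm_nonneg U) hUnorm 2
    have h4 : 0.875 * Λ^2 ≤ M^2 * (‖w‖ + ε₁)^2 := by
      calc 0.875 * Λ^2 ≤ m * (inner ℝ U U : ℝ) := hUU_low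
        _ = M^2 * ‖U‖^2 := by rw [h2, hMsq]
        _ ≤ M^2 * (‖w‖ + ε₁)^2 := mul_le_mul_of_nonneg_left h3 (sq_nonneg M)
    exact sqle _ _ hΛ0 (by positivity)
      (by linarith only [h4, sq_nonneg (M * (‖w‖ + ε₁))])
  have hW2 : ‖w‖^2 ≤ Λ + m * δ₁ + ε₁ * ‖w‖ := by
    have h1 : (inner ℝ w U : ℝ) = ∑ i, lam i * inner ℝ w (s i) := by
      rw [hUdef]; exact hsum_inner_right w univ lam
    have h2 : (inner ℝ w U : ℝ) ≤ Λ + m * δ₁ := by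
      rw [h1]
      calc ∑ i, lam i * (inner ℝ w (s i) : ℝ) ≤ ∑ i, (lam i + δ₁) :=
            Finset.sum_le_sum fun i _ => hcomp' i
        _ = Λ + m * δ₁ := by
            rw [Finset.sum_add_distrib, Finset.sum_const, card_univ, Fintype.card_fin,
              ← hΛdef, nsmul_eq_mul]
    have h3 : ‖w‖^2 = inner ℝ w U + (inner ℝ w (w - U) : ℝ) := by
      rw [inner_sub_right, real_inner_self_eq_norm_sq]; ring
    have h4 : (inner ℝ w (w - U) : ℝ) ≤ ‖w‖ * ε₁ :=
      le_trans (real_inner_le_norm _ _) (mul_le_mul_of_nonneg_left hstat (norm_nonneg w))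
    linarith only [h2, h3, h4]
  have hWM : ‖w‖ ≤ 2 * M := by
    refine aux_wm ‖w‖ M Λ ε₁ δ₁ ?_ hΛM hM14 (norm_nonneg w) hε₁.le hε₁' hδ₁.le hδ₁'
    rw [hMsq]
    exact hW2
  have hΛ26 : Λ ≤ 2.6 * m := by
    have c1 : 1.07*M*(‖w‖+ε₁) ≤ 1.07*M*(2*M+0.5) :=
      mul_le_mul_of_nonneg_left (by linarith only [hWM, hε₁']) (by linarith only [hM0])
    have c2 : 1.07*M*(2*M+0.5) ≤ 2.6*M^2 := by
      linarith only [mul_nonneg (sub_nonneg.2 hM14) hM0, hM0]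
    rw [← hMsq]
    linarith only [hΛM, c1, c2]
  -- step 3: retained index set
  have hml : l ∈ (univ : Finset (Fin m)) := mem_univ l
  obtain ⟨t, htdef⟩ : ∃ t : Finset (Fin m), t = univ.erase l := ⟨_, rfl⟩
  have hm1 : 1 ≤ m := by omega
  have hcard : ((t.card : ℝ)) = (m : ℝ) - 1 := by
    rw [htdef, card_erase_of_mem hml, card_univ, Fintype.card_fin, Nat.cast_sub hm1,
      Nat.cast_one]
  have hmemt : ∀ i, i ∈ t → i ≠ l := fun i hi => (Finset.mem_erase.1 (htdef ▸ hi)).1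
  obtain ⟨Λ', hΛ'def⟩ : ∃ r : ℝ, r = ∑ i ∈ t, lam i := ⟨_, rfl⟩
  have hΛ'0 : 0 ≤ Λ' := hΛ'def ▸ Finset.sum_nonneg fun i _ => hlam i
  have hΛ'Λ : Λ' ≤ Λ := by
    rw [hΛ'def, hΛdef, htdef]
    exact Finset.sum_le_sum_of_subset_of_nonneg (Finset.subset_univ _) fun i _ _ => hlam i
  have hlamlΛ : lam l ≤ Λ := by
    rw [hΛdef]
    exact Finset.single_le_sum (fun i _ => hlam i) (mem_univ l)
  obtain ⟨wh, hwhdef⟩ : ∃ v : EuclideanSpace ℝ (Fin d), v = w - lam l • s l := ⟨_, rfl⟩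
  obtain ⟨u, hudef⟩ : ∃ u : EuclideanSpace ℝ (Fin d), u = ∑ i ∈ t, lam i • s i := ⟨_, rfl⟩
  have hUu : U = u + lam l • s l := by
    rw [hUdef, hudef, htdef]
    exact (Finset.sum_erase_add univ _ hml).symm
  have hwhu : wh - u = w - U := by rw [hwhdef, hUu]; abel
  have hwhu_norm : ‖wh - u‖ ≤ ε₁ := by rw [hwhu]; exact hstat
  have hwh_s : ∀ i, (inner ℝ wh (s i) : ℝ) = inner ℝ w (s i) - lam l * inner ℝ (s l) (s i) := by
    intro i
    rw [hwhdef, inner_sub_left, real_inner_smul_left]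
  have hfeas2 : ∀ i ∈ t, 1 - 0.65 * εd ≤ (inner ℝ wh (s i) : ℝ) := by
    intro i hi
    have hil : i ≠ l := hmemt i hi
    have h1 := (abs_le.1 (hss_off l i fun h => hil h.symm)).2
    have h2 : lam l * (inner ℝ (s l) (s i) : ℝ) ≤ lam l * φ :=
      mul_le_mul_of_nonneg_left h1 (hlam l)
    have h3 : lam l * φ ≤ 2.6 * m * φ :=
      mul_le_mul_of_nonneg_right (le_trans hlamlΛ hΛ26) hφ0
    have h4 : 2.6 * (m : ℝ) * φ ≤ 0.65 * εd := by linarith only [hφ4m]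
    have h5 := hws i
    rw [hwh_s]
    linarith
  -- step 4: lower bound ‖wh‖ against ‖wstar‖
  have hNN : (1 - 0.65 * εd) * ‖wstar‖ ≤ ‖wh‖ := by
    have hc : (0:ℝ) < 1 - 0.65 * εd := by linarith
    have hv : ∀ i, i ≠ l → 1 ≤ y i * (inner ℝ ((1 - 0.65*εd)⁻¹ • wh) (x i) : ℝ) := by
      intro i hi
      have hit : i ∈ t := by rw [htdef]; exact Finset.mem_erase.2 ⟨hi, mem_univ i⟩
      have h1 := hfeas2 i hit
      have h2 : (inner ℝ ((1 - 0.65*εd)⁻¹ • wh) (x i) : ℝ) = (1 - 0.65*εd)⁻¹ * inner ℝ wh (x i) :=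
        real_inner_smul_left _ _ _
      have h3 : y i * (inner ℝ wh (x i) : ℝ) = inner ℝ wh (s i) := (hinner_s_right wh i).symm
      have h4 : y i * ((1 - 0.65*εd)⁻¹ * (inner ℝ wh (x i) : ℝ))
          = (1 - 0.65*εd)⁻¹ * (inner ℝ wh (s i) : ℝ) := by rw [← h3]; ring
      rw [h2, h4]
      have h5 : (1 - 0.65*εd)⁻¹ * (1 - 0.65*εd) ≤ (1 - 0.65*εd)⁻¹ * (inner ℝ wh (s i) : ℝ) :=
        mul_le_mul_of_nonneg_left h1 (inv_nonneg.2 hc.le)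
      rw [inv_mul_cancel₀ hc.ne'] at h5
      exact h5
    have hopt := hwopt _ hv
    have hnv : ‖(1 - 0.65*εd)⁻¹ • wh‖ = (1 - 0.65*εd)⁻¹ * ‖wh‖ := by
      rw [norm_smul, Real.norm_eq_abs, abs_of_pos (by positivity)]
    rw [hnv] at hopt
    have h6 : (1 - 0.65*εd)^2 * (((1 - 0.65*εd)⁻¹ * ‖wh‖)^2) = ‖wh‖^2 := by
      field_simp
    have h7 : ((1 - 0.65*εd) * ‖wstar‖)^2 ≤ ‖wh‖^2 := by
      have p := mul_le_mul_of_nonneg_left hopt (by positivity : (0:ℝ) ≤ (1 - 0.65*εd)^2)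
      linarith only [p, h6]
    exact sqle _ _ (mul_nonneg hc.le (norm_nonneg _)) (norm_nonneg _) h7
  -- step 5: lower bound ‖wstar‖
  obtain ⟨T, hTdef⟩ : ∃ T : EuclideanSpace ℝ (Fin d), T = ∑ i ∈ t, s i := ⟨_, rfl⟩
  have hT1 : (m : ℝ) - 1 ≤ (inner ℝ T wstar : ℝ) := by
    rw [hTdef, sum_inner]
    calc (m : ℝ) - 1 = ∑ _i ∈ t, (1:ℝ) := by
          rw [Finset.sum_const, nsmul_eq_mul, mul_one, hcard]
      _ ≤ ∑ i ∈ t, (inner ℝ (s i) wstar : ℝ) :=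
          Finset.sum_le_sum fun i hi => hwstar_s i (hmemt i hi)
  have hTT : (inner ℝ T T : ℝ) ≤ 1.1 * ((m:ℝ) - 1) + φ * ((m:ℝ) - 1)^2 := by
    have hexp : (inner ℝ T T : ℝ) = ∑ i ∈ t, ∑ j ∈ t, (inner ℝ (s i) (s j) : ℝ) := by
      rw [hTdef, sum_inner]
      exact Finset.sum_congr rfl fun i _ => inner_sum _ _ _
    rw [hexp]
    have key : ∀ i ∈ t, ∀ j ∈ t, (inner ℝ (s i) (s j) : ℝ) ≤ φ + (if i = j then 1.1 - φ else 0) := by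
      intro i _ j _
      by_cases h : i = j
      · subst h; rw [if_pos rfl]; linarith [(hss_diag i).2]
      · rw [if_neg h]; linarith [(abs_le.1 (hss_off i j h)).2]
    have hrow : ∀ i ∈ t, ∑ j ∈ t, (φ + if i = j then 1.1 - φ else 0)
        = φ * ((m:ℝ) - 1) + (1.1 - φ) := by
      intro i hi
      rw [Finset.sum_add_distrib, Finset.sum_const, Finset.sum_ite_eq, if_pos hi,
        nsmul_eq_mul, hcard, mul_comm]
    calc ∑ i ∈ t, ∑ j ∈ t, (inner ℝ (s i) (s j) : ℝ)
        ≤ ∑ i ∈ t, ∑ j ∈ t, (φ + if i = j then 1.1 - φ else 0) :=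
          Finset.sum_le_sum fun i hi => Finset.sum_le_sum fun j hj => key i hi j hj
      _ = ∑ _i ∈ t, (φ * ((m:ℝ) - 1) + (1.1 - φ)) := Finset.sum_congr rfl hrow
      _ = ((m:ℝ) - 1) * (φ * ((m:ℝ) - 1) + (1.1 - φ)) := by
          rw [Finset.sum_const, nsmul_eq_mul, hcard]
      _ ≤ 1.1 * ((m:ℝ) - 1) + φ * ((m:ℝ) - 1)^2 := by
          linarith only [mul_nonneg hφ0 (by linarith only [hm2] : (0:ℝ) ≤ (m:ℝ) - 1)]
  have hφm : φ * m ≤ 0.025 := by linarith only [hφ4m, hεd'.le]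
  have hT2 : ‖T‖^2 ≤ 1.125 * ((m:ℝ) - 1) := by
    have h1 : (inner ℝ T T : ℝ) = ‖T‖^2 := real_inner_self_eq_norm_sq T
    have h2 : φ * ((m:ℝ) - 1)^2 ≤ 0.025 * ((m:ℝ) - 1) := by
      have p := mul_le_mul_of_nonneg_right hφm (by linarith only [hm2] : (0:ℝ) ≤ (m:ℝ) - 1)
      have q := mul_nonneg hφ0
        (by linarith only [hm2] : (0:ℝ) ≤ (m:ℝ) * ((m:ℝ) - 1) - ((m:ℝ) - 1)^2)
      linarith only [p, q]
    linarith [hTT, h1.symm.le, h1.le]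
  have hT3 : (m:ℝ) - 1 ≤ ‖T‖ * ‖wstar‖ := le_trans hT1 (real_inner_le_norm _ _)
  have hNstar : (m : ℝ) ≤ 2.25 * ‖wstar‖^2 :=
    aux_nstar m ‖T‖ ‖wstar‖ hm2 hT2 hT3 (norm_nonneg T) (norm_nonneg wstar)
  -- step 6: main inequality
  have ha1 : ‖wh‖^2 ≤ (inner ℝ wh u : ℝ) + ε₁ * ‖wh‖ := by
    have h1 : ‖wh‖^2 = inner ℝ wh u + (inner ℝ wh (wh - u) : ℝ) := by
      rw [inner_sub_right, real_inner_self_eq_norm_sq]; ring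
    have h2 : (inner ℝ wh (wh - u) : ℝ) ≤ ‖wh‖ * ε₁ :=
      le_trans (real_inner_le_norm _ _) (mul_le_mul_of_nonneg_left hwhu_norm (norm_nonneg _))
    linarith only [h1, h2]
  have ha2 : (inner ℝ wh u : ℝ) ≤ Λ' + m * δ₁ + 1.69 * m * εd := by
    have h1 : (inner ℝ wh u : ℝ) = ∑ i ∈ t, lam i * inner ℝ wh (s i) := by
      rw [hudef]; exact hsum_inner_right wh t lam
    have key : ∀ i ∈ t, lam i * (inner ℝ wh (s i) : ℝ) ≤ lam i + δ₁ + φ * (lam l * lam i) := by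
      intro i hi
      have hil : i ≠ l := hmemt i hi
      have h2 := hcomp' i
      have h3 := (abs_le.1 (hss_off l i fun h => hil h.symm)).1
      rw [hwh_s]
      linarith only [h2, mul_nonneg (mul_nonneg (hlam i) (hlam l))
        (by linarith only [h3] : (0:ℝ) ≤ (inner ℝ (s l) (s i) : ℝ) + φ)]
    have h4 : ∑ i ∈ t, (lam i + δ₁ + φ * (lam l * lam i))
        = Λ' + ((m:ℝ) - 1) * δ₁ + φ * lam l * Λ' := by
      rw [Finset.sum_add_distrib, Finset.sum_add_distrib, Finset.sum_const, nsmul_eq_mul,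
        hcard, hΛ'def]
      have h5 : ∑ i ∈ t, φ * (lam l * lam i) = φ * lam l * ∑ i ∈ t, lam i := by
        rw [Finset.mul_sum]
        exact Finset.sum_congr rfl fun i _ => by ring
      rw [h5]
    have h6 : φ * lam l * Λ' ≤ 1.69 * m * εd := by
      have e1 : φ * (lam l * Λ') ≤ φ * (Λ * Λ) :=
        mul_le_mul_of_nonneg_left (mul_le_mul hlamlΛ hΛ'Λ hΛ'0 hΛ0) hφ0
      have e2 : φ * (Λ * Λ) ≤ φ * ((2.6*m) * (2.6*m)) :=
        mul_le_mul_of_nonneg_left (mul_le_mul hΛ26 hΛ26 hΛ0 (by positivity)) hφ0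
      have e3 : φ * ((2.6*(m:ℝ)) * (2.6*m)) = 1.69 * m * (φ * (4*m)) := by ring
      have e4 : 1.69 * (m:ℝ) * (φ * (4*m)) ≤ 1.69 * m * εd :=
        mul_le_mul_of_nonneg_left hφ4m (by positivity)
      linarith only [e1, e2, e4, e3.le, e3.ge]
    have h7 : ∑ i ∈ t, lam i * (inner ℝ wh (s i) : ℝ) ≤ ∑ i ∈ t, (lam i + δ₁ + φ * (lam l * lam i)) :=
      Finset.sum_le_sum key
    have h8 : ((m:ℝ) - 1) * δ₁ ≤ m * δ₁ := by linarith only [hδ₁.le]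
    linarith [h1.le, h1.ge, h7, h4.le, h6, h8]
  have ha3 : Λ' ≤ (inner ℝ wh wstar : ℝ) + ε₁ * ‖wstar‖ := by
    have h1 : (inner ℝ u wstar : ℝ) = ∑ i ∈ t, lam i * inner ℝ (s i) wstar := by
      rw [hudef, sum_inner]
      exact Finset.sum_congr rfl fun i _ => real_inner_smul_left _ _ _
    have h2 : Λ' ≤ (inner ℝ u wstar : ℝ) := by
      rw [h1, hΛ'def]
      refine Finset.sum_le_sum fun i hi => ?_
      linarith only [mul_le_mul_of_nonneg_left (hwstar_s i (hmemt i hi)) (hlam i)]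
    have h3 : (inner ℝ (u - wh) wstar : ℝ) ≤ ε₁ * ‖wstar‖ := by
      refine le_trans (real_inner_le_norm _ _) ?_
      rw [norm_sub_rev]
      exact mul_le_mul_of_nonneg_right hwhu_norm (norm_nonneg _)
    have h4 : (inner ℝ (u - wh) wstar : ℝ) = inner ℝ u wstar - inner ℝ wh wstar :=
      inner_sub_left _ _ _
    linarith
  have hmain : ‖wh‖^2 ≤ (inner ℝ wh wstar : ℝ) + ε₁ * ‖wh‖ + ε₁ * ‖wstar‖ + m * δ₁ + 1.69 * m * εd := by
    linarith only [ha1, ha2, ha3]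
  -- step 7: conclusion
  have ha := auxsq εd hεd (by linarith)
  have hb := auxsq ε₁ hε₁ (by linarith)
  have hcc := auxsq δ₁ hδ₁ (by linarith)
  have hgw : w - (lam l * y l) • x l = wh := by
    rw [hwhdef]
    simp only [hsdef, mul_smul]
  rw [hgw]
  exact aux_fin ‖wh‖ ‖wstar‖ m εd ε₁ δ₁ _ _ _ _ M hmain hNN hNstar hMsq hM14
    (norm_nonneg wh) (norm_nonneg wstar) hεd hεd' hε₁ hε₁' hδ₁ hδ₁' ha hb hcc
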